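/- Let s ≥ 2 be an integer and let F be the annealed free energy of the hierarchical pinning model with b = s. There exists c > 1 such that for all h ∈ (0,1): c^{-1} e^{-c/h} ≤ F(h) ≤ c e^{-1/(c h)}. -/

import Mathlib

set_option maxHeartbeats 1000000 in
theorem stmt_11 (s : ℕ) (hs : 2 ≤ s) (r : ℝ → ℕ → ℝ)
    (hr0 : ∀ h, r h 0 = Real.exp h)
    (hrec : ∀ h n, r h (n+1) = (r h n ^ s + s - 1) / s)
    (F : ℝ → ℝ)
    (hF : ∀ h, Filter.Tendsto (fun n : ℕ => ((s : ℝ) ^ n)⁻¹ * Real.log (r h n))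
      Filter.atTop (nhds (F h))) :
    ∃ c : ℝ, 1 < c ∧ ∀ h ∈ Set.Ioo (0:ℝ) 1,
      c⁻¹ * Real.exp (-c / h) ≤ F h ∧ F h ≤ c * Real.exp (-1 / (c * h)) := by
  have hs2 : (2:ℝ) ≤ (s:ℝ) := by exact_mod_cast hs
  have hs0 : (0:ℝ) < s := by linarith
  have hs1 : (1:ℝ) < s := by linarith
  refine ⟨20 * s, by linarith, ?_⟩
  intro h hh
  obtain ⟨hh0, hh1⟩ := hh
  set x : ℕ → ℝ := r h with hxdef
  have hx0 : x 0 = Real.exp h := hr0 h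
  have hxr : ∀ n, x (n+1) = (x n ^ s + s - 1) / s := fun n => hrec h n
  have hx1 : ∀ n, 1 < x n := by
    intro n
    induction n with
    | zero => rw [hx0]; exact Real.one_lt_exp_iff.mpr hh0
    | succ n ih =>
      rw [hxr, lt_div_iff₀ hs0]
      have h1 : 1 < x n ^ s := one_lt_pow₀ ih (by omega)
      linarith
  have hd : ∀ n, 0 < x n - 1 := fun n => by linarith [hx1 n]
  have hxpos : ∀ n, 0 < x n := fun n => lt_trans one_pos (hx1 n)
  have hdsucc : ∀ n, x (n+1) - 1 = (x n ^ s - 1) / s := by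
    intro n
    rw [hxr]
    field_simp
    ring
  -- key quadratic growth
  have key2 : ∀ n, (x n - 1) + (x n - 1) ^ 2 / 2 ≤ x (n+1) - 1 := by
    intro n
    have hdn := hd n
    have hcast : ((s-2 : ℕ):ℝ) = (s:ℝ) - 2 := by push_cast [hs]; ring
    have hpow : (1:ℝ) + ((s:ℝ)-2) * (x n - 1) ≤ (1 + (x n - 1))^(s-2) := by
      have := one_add_mul_le_pow (a := x n - 1) (by linarith) (s-2)
      rwa [hcast] at this
    have hxs : x n ^ s = (1 + (x n - 1))^2 * (1 + (x n - 1))^(s-2) := by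
      rw [show (1:ℝ) + (x n - 1) = x n by ring, ← pow_add]
      congr 1
      omega
    have h2 : (1 + (x n - 1))^2 * (1 + ((s:ℝ)-2) * (x n - 1)) ≤ x n ^ s := by
      rw [hxs]; exact mul_le_mul_of_nonneg_left hpow (by positivity)
    rw [hdsucc, le_div_iff₀ hs0]
    nlinarith [h2, sq_nonneg (x n - 1),
      mul_nonneg (mul_nonneg hdn.le hdn.le) (by linarith : (0:ℝ) ≤ (s:ℝ)-2),
      mul_nonneg (mul_nonneg (mul_nonneg hdn.le hdn.le) hdn.le) (by linarith : (0:ℝ) ≤ (s:ℝ)-2)]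
  have hmono : Monotone (fun n => x n - 1) := by
    apply monotone_nat_of_le_succ
    intro n
    nlinarith [key2 n, sq_nonneg (x n - 1)]
  -- upper growth
  have key3 : ∀ n, x (n+1) - 1 ≤ (x n - 1) * x n ^ (s-1) := by
    intro n
    have hgeom : x n ^ s - 1 = (∑ i ∈ Finset.range s, x n ^ i) * (x n - 1) :=
      (geom_sum_mul _ _).symm
    have hsum : (∑ i ∈ Finset.range s, x n ^ i) ≤ (s:ℝ) * x n ^ (s-1) := by
      have := Finset.sum_le_card_nsmul (Finset.range s) (fun i => x n ^ i) (x n ^ (s-1))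
        (fun i hi => pow_le_pow_right₀ (hx1 n).le (by
          have := Finset.mem_range.mp hi; omega))
      simpa [Finset.card_range, nsmul_eq_mul] using this
    rw [hdsucc, div_le_iff₀ hs0, hgeom]
    calc (∑ i ∈ Finset.range s, x n ^ i) * (x n - 1)
        ≤ ((s:ℝ) * x n ^ (s-1)) * (x n - 1) := by
          apply mul_le_mul_of_nonneg_right hsum
          linarith [hx1 n]
      _ = (x n - 1) * x n ^ (s-1) * s := by ring
  -- inverse decreases by at most s-1
  have invkey : ∀ n, 1/(x n - 1) - ((s:ℝ)-1) ≤ 1/(x (n+1) - 1) := by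
    intro n
    by_cases hc : 1 ≤ ((s:ℝ)-1) * (x n - 1)
    · have h0 : 1/(x n - 1) - ((s:ℝ)-1) ≤ 0 := by
        rw [sub_nonpos, div_le_iff₀ (hd n)]
        linarith
      have h1 : (0:ℝ) < 1/(x (n+1) - 1) := by
        have := hd (n+1); positivity
      linarith
    · push_neg at hc
      have hd1 : x n - 1 < 1 := by
        nlinarith [hd n, mul_nonneg (hd n).le (by linarith : (0:ℝ) ≤ (s:ℝ)-2)]
      have hcast : ((s-1 : ℕ):ℝ) = (s:ℝ) - 1 := by
        have h1 : (1:ℕ) ≤ s := by omega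
        push_cast [h1]; ring
      have hber : 1 - ((s:ℝ)-1) * (x n - 1) ≤ (1 - (x n - 1))^(s-1) := by
        have := one_add_mul_le_pow (a := -(x n - 1)) (by linarith) (s-1)
        rw [hcast] at this
        have e : (1:ℝ) + -(x n - 1) = 1 - (x n - 1) := by ring
        rw [e] at this
        linarith
      have hpownn : (0:ℝ) ≤ x n ^ (s-1) := pow_nonneg (hxpos n).le _
      have hkey : (x n)^(s-1) * (1 - ((s:ℝ)-1)*(x n - 1)) ≤ 1 := by
        calc (x n)^(s-1) * (1 - ((s:ℝ)-1)*(x n - 1))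
            ≤ (x n)^(s-1) * (1 - (x n - 1))^(s-1) :=
              mul_le_mul_of_nonneg_left hber hpownn
          _ = (x n * (1 - (x n - 1)))^(s-1) := by rw [mul_pow]
          _ = (1 - (x n - 1)^2)^(s-1) := by ring_nf
          _ ≤ 1 := pow_le_one₀ (by nlinarith [hd n]) (by nlinarith [hd n])
      have hA : (1 - ((s:ℝ)-1)*(x n - 1))/(x n - 1) ≤ 1/((x n - 1) * x n ^ (s-1)) := by
        rw [div_le_div_iff₀ (hd n) (by
          have h1 : (0:ℝ) < x n ^ (s-1) := pow_pos (hxpos n) _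
          have := hd n; positivity)]
        nlinarith [hkey, hd n]
      have hB : 1/((x n - 1) * x n ^ (s-1)) ≤ 1/(x (n+1) - 1) :=
        one_div_le_one_div_of_le (hd (n+1)) (key3 n)
      have hC : 1/(x n - 1) - ((s:ℝ)-1) = (1 - ((s:ℝ)-1)*(x n - 1))/(x n - 1) := by
        rw [sub_div, mul_div_assoc, div_self (hd n).ne', mul_one]
      linarith
  -- inverse decreases by at least 1/5 while x - 1 ≤ 3
  have invlow : ∀ n, x n - 1 ≤ 3 → 1/(x (n+1) - 1) ≤ 1/(x n - 1) - 1/5 := by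
    intro n h3
    have hdn := hd n
    have pos' : (0:ℝ) < (x n - 1) + (x n - 1) ^ 2 / 2 := by nlinarith [sq_nonneg (x n - 1)]
    have h1 : 1/(x (n+1) - 1) ≤ 1/((x n - 1) + (x n - 1) ^ 2 / 2) :=
      one_div_le_one_div_of_le pos' (key2 n)
    refine h1.trans ?_
    rw [show 1/(x n - 1) - 1/5 = (5 - (x n - 1))/(5 * (x n - 1)) by
      rw [div_sub_div _ _ (hd n).ne' (by norm_num : (5:ℝ) ≠ 0)]
      congr 1 <;> ring]
    rw [div_le_div_iff₀ pos' (by linarith)]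
    nlinarith [sq_nonneg (x n - 1), mul_nonneg (sq_nonneg (x n - 1)) (by linarith : (0:ℝ) ≤ 3 - (x n - 1))]
  -- bounds on x 0 - 1
  have hd0l : h ≤ x 0 - 1 := by
    have := Real.add_one_le_exp h
    rw [hx0]; linarith
  have hd0u : x 0 - 1 ≤ 3 * h := by
    have h1 : 1 - h ≤ Real.exp (-h) := by have := Real.add_one_le_exp (-h); linarith
    have h2 : Real.exp h * (1 - h) ≤ 1 := by
      have := mul_le_mul_of_nonneg_left h1 (Real.exp_pos h).le
      rwa [← Real.exp_add, add_neg_cancel, Real.exp_zero] at this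
    have h3 : Real.exp h ≤ 3 := by
      have := Real.exp_le_exp.mpr hh1.le
      have := Real.exp_one_lt_d9
      linarith
    rw [hx0]
    nlinarith [Real.exp_pos h]
  -- log recursion bounds
  have loglow : ∀ n, (s:ℝ) * Real.log (x n) - Real.log s ≤ Real.log (x (n+1)) := by
    intro n
    have hle : x n ^ s / s ≤ x (n+1) := by
      rw [hxr]
      gcongr
      linarith
    have hlog := Real.log_le_log (div_pos (pow_pos (hxpos n) s) hs0) hle
    rw [Real.log_div (pow_pos (hxpos n) s).ne' (ne_of_gt hs0), Real.log_pow] at hlog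
    push_cast at hlog
    linarith
  have logup : ∀ n, Real.log (x (n+1)) ≤ (s:ℝ) * Real.log (x n) := by
    intro n
    have h1 : 1 ≤ x n ^ s := (one_lt_pow₀ (hx1 n) (by omega)).le
    have hle : x (n+1) ≤ x n ^ s := by
      rw [hxr, div_le_iff₀ hs0]
      nlinarith
    have hlog := Real.log_le_log (hxpos _) hle
    rw [Real.log_pow] at hlog
    push_cast at hlog
    linarith
  ---------------------------------------------------------------
  -- LOWER BOUND
  ---------------------------------------------------------------
  set N : ℕ := ⌈(5:ℝ)/h⌉₊ with hNdef
  have hdN : 3 ≤ x N - 1 := by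
    by_contra hcon
    push_neg at hcon
    have hall : ∀ n, n ≤ N → 1/(x n - 1) ≤ 1/(x 0 - 1) - n/5 := by
      intro n
      induction n with
      | zero => intro _; norm_num
      | succ m ih =>
        intro hmN
        have hm : m ≤ N := by omega
        have h3 : x m - 1 ≤ 3 := le_of_lt (lt_of_le_of_lt (hmono hm) hcon)
        have h4 := invlow m h3
        have h5 := ih hm
        push_cast
        linarith
    have h5 : (5:ℝ)/h ≤ N := Nat.le_ceil _
    have hi0 : 1/(x 0 - 1) ≤ 1/h := one_div_le_one_div_of_le hh0 hd0l
    have h6 := hall N le_rfl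
    have hpos : (0:ℝ) < 1/(x N - 1) := by have := hd N; positivity
    have e1 : (5:ℝ)/h = 5 * (1/h) := by ring
    rw [e1] at h5
    linarith
  have hlog4 : 2 * Real.log 2 ≤ Real.log (x N) := by
    have h4 : (4:ℝ) ≤ x N := by linarith
    calc 2 * Real.log 2 = Real.log 4 := by
          rw [show (4:ℝ) = 2^(2:ℕ) by norm_num, Real.log_pow]; push_cast; ring
      _ ≤ Real.log (x N) := Real.log_le_log (by norm_num) h4
  have hL2 : Real.log s / ((s:ℝ)-1) ≤ Real.log 2 := by
    have h2p : (s:ℝ) ≤ 2^(s-1) := by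
      have h1 : s - 1 < 2^(s-1) := (s-1).lt_two_pow_self
      have h2 : s ≤ 2^(s-1) := by omega
      exact_mod_cast h2
    have h3 : Real.log s ≤ ((s:ℝ)-1) * Real.log 2 := by
      calc Real.log s ≤ Real.log ((2:ℝ)^(s-1)) := Real.log_le_log hs0 h2p
        _ = ((s-1:ℕ):ℝ) * Real.log 2 := Real.log_pow _ _
        _ = ((s:ℝ)-1) * Real.log 2 := by
            have h1 : (1:ℕ) ≤ s := by omega
            push_cast [h1]; ring
    rw [div_le_iff₀ (by linarith)]
    linarith
  have hLnonneg : (0:ℝ) ≤ Real.log s / ((s:ℝ)-1) :=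
    div_nonneg (Real.log_nonneg (by linarith)) (by linarith)
  have hu : Real.log 2 ≤ Real.log (x N) - Real.log s / ((s:ℝ)-1) := by linarith
  have hstep : ∀ n, (s:ℝ) * (Real.log (x n) - Real.log s / ((s:ℝ)-1))
      ≤ Real.log (x (n+1)) - Real.log s / ((s:ℝ)-1) := by
    intro n
    have hLe : ((s:ℝ)-1) * (Real.log s / ((s:ℝ)-1)) = Real.log s := by
      rw [mul_comm, div_mul_cancel₀ _ (by linarith : (s:ℝ)-1 ≠ 0)]
    have := loglow n
    linarith [this, hLe]
  have iter : ∀ k, (s:ℝ)^k * (Real.log (x N) - Real.log s / ((s:ℝ)-1))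
      ≤ Real.log (x (N+k)) - Real.log s / ((s:ℝ)-1) := by
    intro k
    induction k with
    | zero => simp
    | succ k ih =>
      have h1 : (s:ℝ)^(k+1) * (Real.log (x N) - Real.log s / ((s:ℝ)-1))
          = (s:ℝ) * ((s:ℝ)^k * (Real.log (x N) - Real.log s / ((s:ℝ)-1))) := by ring
      rw [h1]
      calc (s:ℝ) * ((s:ℝ)^k * (Real.log (x N) - Real.log s / ((s:ℝ)-1)))
          ≤ (s:ℝ) * (Real.log (x (N+k)) - Real.log s / ((s:ℝ)-1)) :=
            mul_le_mul_of_nonneg_left ih hs0.le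
        _ ≤ Real.log (x (N+k+1)) - Real.log s / ((s:ℝ)-1) := hstep (N+k)
  have hev : ∀ n, N ≤ n → ((s:ℝ)^N)⁻¹ * Real.log 2 ≤ ((s:ℝ)^n)⁻¹ * Real.log (x n) := by
    intro n hn
    obtain ⟨k, rfl⟩ : ∃ k, n = N + k := ⟨n - N, by omega⟩
    have h1 : (s:ℝ)^k * Real.log 2 ≤ Real.log (x (N+k)) := by
      have h2 : (s:ℝ)^k * Real.log 2 ≤ (s:ℝ)^k * (Real.log (x N) - Real.log s / ((s:ℝ)-1)) :=
        mul_le_mul_of_nonneg_left hu (by positivity)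
      linarith [iter k]
    calc ((s:ℝ)^N)⁻¹ * Real.log 2
        = ((s:ℝ)^(N+k))⁻¹ * ((s:ℝ)^k * Real.log 2) := by
          rw [pow_add, mul_inv, mul_assoc,
            inv_mul_cancel_left₀ (by positivity : (0:ℝ) < (s:ℝ)^k).ne']
      _ ≤ ((s:ℝ)^(N+k))⁻¹ * Real.log (x (N+k)) :=
          mul_le_mul_of_nonneg_left h1 (by positivity)
  have FN : ((s:ℝ)^N)⁻¹ * Real.log 2 ≤ F h :=
    ge_of_tendsto (hF h) (Filter.eventually_atTop.2 ⟨N, hev⟩)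
  have hNle : (N:ℝ) ≤ 5/h + 1 := (Nat.ceil_lt_add_one (by positivity)).le
  have hsN : (s:ℝ)^N ≤ s * Real.exp (5 * Real.log s / h) := by
    calc (s:ℝ)^N = (s:ℝ)^(N:ℝ) := (Real.rpow_natCast _ _).symm
      _ ≤ (s:ℝ)^((5/h + 1 : ℝ)) := Real.rpow_le_rpow_of_exponent_le hs1.le hNle
      _ = Real.exp (Real.log s * (5/h + 1)) := by
          rw [Real.rpow_def_of_pos hs0]
      _ = s * Real.exp (5 * Real.log s / h) := by
          rw [mul_add, Real.exp_add, mul_one, Real.exp_log hs0, mul_comm]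
          congr 1
          ring
  have hlow : (s:ℝ)⁻¹ * Real.exp (-(5 * Real.log s)/h) * Real.log 2
      ≤ ((s:ℝ)^N)⁻¹ * Real.log 2 := by
    apply mul_le_mul_of_nonneg_right _ (Real.log_nonneg one_le_two)
    have e1 : (s:ℝ)⁻¹ * Real.exp (-(5*Real.log s)/h)
        = ((s:ℝ) * Real.exp (5*Real.log s/h))⁻¹ := by
      rw [mul_inv, neg_div, Real.exp_neg]
    rw [e1]
    exact inv_anti₀ (by positivity) hsN
  have hfin : (20*(s:ℝ))⁻¹ * Real.exp (-(20*(s:ℝ))/h)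
      ≤ (s:ℝ)⁻¹ * Real.exp (-(5*Real.log s)/h) * Real.log 2 := by
    have hlogs : Real.log s ≤ (s:ℝ) := by
      have := Real.log_le_sub_one_of_pos hs0; linarith
    have hexp : Real.exp (-(20*(s:ℝ))/h) ≤ Real.exp (-(5*Real.log s)/h) := by
      apply Real.exp_le_exp.mpr
      rw [div_le_div_iff₀ hh0 hh0]
      nlinarith [mul_nonneg hh0.le (by linarith : (0:ℝ) ≤ 20*(s:ℝ) - 5*Real.log s)]
    have hl2 : (0.6931471803 : ℝ) < Real.log 2 := Real.log_two_gt_d9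
    have hcoef : (20*(s:ℝ))⁻¹ ≤ (s:ℝ)⁻¹ * Real.log 2 := by
      rw [mul_inv]
      calc (20:ℝ)⁻¹ * (s:ℝ)⁻¹ ≤ Real.log 2 * (s:ℝ)⁻¹ := by
            apply mul_le_mul_of_nonneg_right _ (by positivity)
            have : ((20:ℝ))⁻¹ ≤ 0.6931471803 := by norm_num
            linarith
        _ = (s:ℝ)⁻¹ * Real.log 2 := by ring
    calc (20*(s:ℝ))⁻¹ * Real.exp (-(20*(s:ℝ))/h)
        ≤ ((s:ℝ)⁻¹ * Real.log 2) * Real.exp (-(5*Real.log s)/h) :=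
          mul_le_mul hcoef hexp (Real.exp_pos _).le (by
            have : (0:ℝ) < (s:ℝ)⁻¹ := by positivity
            positivity)
      _ = (s:ℝ)⁻¹ * Real.exp (-(5*Real.log s)/h) * Real.log 2 := by ring
  constructor
  · calc (20*(s:ℝ))⁻¹ * Real.exp (-(20*(s:ℝ))/h)
        ≤ (s:ℝ)⁻¹ * Real.exp (-(5*Real.log s)/h) * Real.log 2 := hfin
      _ ≤ ((s:ℝ)^N)⁻¹ * Real.log 2 := hlow
      _ ≤ F h := FN
  ---------------------------------------------------------------
  -- UPPER BOUND
  ---------------------------------------------------------------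
  · set M : ℕ := ⌊1/(6*((s:ℝ)-1)*h)⌋₊ with hMdef
    have hinv : ∀ n, 1/(x 0 - 1) - n*((s:ℝ)-1) ≤ 1/(x n - 1) := by
      intro n
      induction n with
      | zero => simp
      | succ m ih =>
        have := invkey m
        push_cast
        linarith
    have h6hpos : (0:ℝ) < 6*h := by linarith
    have hdM : x M - 1 ≤ 6*h := by
      have hfl : (M:ℝ) ≤ 1/(6*((s:ℝ)-1)*h) := Nat.floor_le (by
        have h1 : (0:ℝ) < (s:ℝ)-1 := by linarith
        positivity)
      have h1 : 1/(3*h) ≤ 1/(x 0 - 1) := one_div_le_one_div_of_le (hd 0) hd0u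
      have h2 : (M:ℝ)*((s:ℝ)-1) ≤ 1/(6*h) := by
        calc (M:ℝ)*((s:ℝ)-1) ≤ (1/(6*((s:ℝ)-1)*h)) * ((s:ℝ)-1) :=
              mul_le_mul_of_nonneg_right hfl (by linarith)
          _ = 1/(6*h) := by
              have hs1' : (s:ℝ)-1 ≠ 0 := by linarith
              have hh' : h ≠ 0 := hh0.ne'
              field_simp
      have e1 : 1/(3*h) - 1/(6*h) = 1/(6*h) := by
        field_simp
        ring
      have h3 : 1/(6*h) ≤ 1/(x M - 1) := by linarith [hinv M]
      rw [div_le_div_iff₀ h6hpos (hd M)] at h3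
      linarith
    have hanti : ∀ n, ((s:ℝ)^(n+1))⁻¹ * Real.log (x (n+1)) ≤ ((s:ℝ)^n)⁻¹ * Real.log (x n) := by
      intro n
      rw [pow_succ, mul_inv, mul_assoc]
      apply mul_le_mul_of_nonneg_left _ (by positivity)
      rw [inv_mul_le_iff₀ hs0]
      exact logup n
    have hAnti : Antitone (fun n : ℕ => ((s:ℝ)^n)⁻¹ * Real.log (x n)) :=
      antitone_nat_of_succ_le hanti
    have FM : F h ≤ ((s:ℝ)^M)⁻¹ * Real.log (x M) :=
      le_of_tendsto (hF h) (Filter.eventually_atTop.2 ⟨M, fun n hn => hAnti hn⟩)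
    have hlogM : Real.log (x M) ≤ 6*h := by
      have := Real.log_le_sub_one_of_pos (hxpos M)
      linarith [hdM]
    have hF1 : F h ≤ ((s:ℝ)^M)⁻¹ * (6*h) := by
      refine FM.trans ?_
      exact mul_le_mul_of_nonneg_left hlogM (by positivity)
    have hMgt : 1/(6*((s:ℝ)-1)*h) - 1 ≤ (M:ℝ) := (Nat.sub_one_lt_floor _).le
    have hsMinv : ((s:ℝ)^M)⁻¹
        ≤ (s:ℝ) * Real.exp (-(Real.log s/(6*((s:ℝ)-1)*h))) := by
      have h1 : (s:ℝ)^((1/(6*((s:ℝ)-1)*h) - 1 : ℝ)) ≤ (s:ℝ)^(M:ℝ) :=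
        Real.rpow_le_rpow_of_exponent_le hs1.le hMgt
      rw [← Real.rpow_natCast (s:ℝ) M]
      have h2 : ((s:ℝ)^(M:ℝ))⁻¹ ≤ ((s:ℝ)^((1/(6*((s:ℝ)-1)*h) - 1 : ℝ)))⁻¹ :=
        inv_anti₀ (Real.rpow_pos_of_pos hs0 _) h1
      refine h2.trans ?_
      rw [Real.rpow_def_of_pos hs0, ← Real.exp_neg]
      rw [show -(Real.log s * (1/(6*((s:ℝ)-1)*h) - 1))
          = Real.log s + -(Real.log s/(6*((s:ℝ)-1)*h)) by ring]
      rw [Real.exp_add, Real.exp_log hs0]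
    have hl2s : (0.6931471803:ℝ) < Real.log s :=
      lt_of_lt_of_le Real.log_two_gt_d9 (Real.log_le_log (by norm_num) hs2)
    have hexp2 : Real.exp (-(Real.log s/(6*((s:ℝ)-1)*h))) ≤ Real.exp (-1/(20*(s:ℝ)*h)) := by
      apply Real.exp_le_exp.mpr
      rw [neg_div]
      apply neg_le_neg
      have hpos1 : (0:ℝ) < 20*(s:ℝ)*h := by positivity
      have hpos2 : (0:ℝ) < 6*((s:ℝ)-1)*h := by
        have h1 : (0:ℝ) < (s:ℝ)-1 := by linarith
        positivity
      rw [div_le_div_iff₀ hpos1 hpos2]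
      have hb : (0:ℝ) ≤ 20*(s:ℝ)*Real.log s - 6*((s:ℝ)-1) := by
        nlinarith [mul_le_mul_of_nonneg_left hl2s.le (by linarith : (0:ℝ) ≤ 20*(s:ℝ))]
      nlinarith [mul_nonneg hh0.le hb]
    calc F h ≤ ((s:ℝ)^M)⁻¹ * (6*h) := hF1
      _ ≤ ((s:ℝ) * Real.exp (-1/(20*(s:ℝ)*h))) * (6*h) := by
          apply mul_le_mul_of_nonneg_right _ (by positivity)
          exact hsMinv.trans (mul_le_mul_of_nonneg_left hexp2 hs0.le)
      _ ≤ 20*(s:ℝ) * Real.exp (-1/(20*(s:ℝ)*h)) := by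
          nlinarith [mul_nonneg (mul_pos hs0 (Real.exp_pos (-1/(20*(s:ℝ)*h)))).le
            (by linarith : (0:ℝ) ≤ 20 - 6*h)]
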